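/- Let x ∈ ℝ^s and U₂ ∈ ℝ^{n×s} with U₂ᵀU₂ invertible, and suppose xᵀ(U₂ᵀU₂)^{-1}x ≤ ε² for some ε ∈ (0,1). Then for any U₁ ∈ ℝ^{n×s}, we have ‖U₁x‖₂ ≤ ε · ‖U₁U₂ᵀ‖. -/

import Mathlib

open scoped Matrix

/-- Spectral (ℓ2 operator) norm of a real matrix. -/
noncomputable def spec {m n : Type*} [Fintype m] [Fintype n] [DecidableEq n]
    (A : Matrix m n ℝ) : ℝ :=
  ‖(Matrix.toEuclideanLin A).toContinuousLinearMap‖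

/-- Frobenius norm of a real matrix. -/
noncomputable def frob {m n : Type*} [Fintype m] [Fintype n] (A : Matrix m n ℝ) : ℝ :=
  Real.sqrt (∑ i, ∑ j, (A i j)^2)

/-- Euclidean norm of a real vector. -/
noncomputable def vnorm {n : Type*} [Fintype n] (x : n → ℝ) : ℝ :=
  Real.sqrt (∑ i, x i^2)

lemma vnorm_eq' {n : Type*} [Fintype n] (x : n → ℝ) :
    vnorm x = ‖(WithLp.equiv 2 (n → ℝ)).symm x‖ := by
  rw [EuclideanSpace.norm_eq, vnorm]
  congr 1; apply Finset.sum_congr rfl; intro i _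
  simp [Real.norm_eq_abs, sq_abs]

/-- If `x ∈ ℝ^s`, `U₂ ∈ ℝ^{n×s}` with `U₂ᵀU₂` invertible and
`xᵀ(U₂ᵀU₂)⁻¹x ≤ ε²` for some `ε ∈ (0,1)`, then for any `U₁ ∈ ℝ^{n×s}`,
`‖U₁ x‖₂ ≤ ε * ‖U₁ U₂ᵀ‖`. -/
theorem U1_U2_approx {n s : ℕ} (x : Fin s → ℝ) (U₁ U₂ : Matrix (Fin n) (Fin s) ℝ)
    (hinv : IsUnit (U₂.transpose * U₂).det) (ε : ℝ) (hε : ε ∈ Set.Ioo (0:ℝ) 1)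
    (hx : x ⬝ᵥ ((U₂.transpose * U₂)⁻¹).mulVec x ≤ ε ^ 2) :
    vnorm (U₁.mulVec x) ≤ ε * spec (U₁ * U₂.transpose) := by
  obtain ⟨hε0, hε1⟩ := hε
  set M := U₂.transpose * U₂ with hM
  have hMi : M * M⁻¹ = 1 := Matrix.mul_nonsing_inv M hinv
  set v : Fin s → ℝ := M⁻¹.mulVec x with hv
  set w : Fin n → ℝ := U₂.mulVec v with hw
  have hMv : M.mulVec v = x := by
    rw [hv, Matrix.mulVec_mulVec, hMi, Matrix.one_mulVec]
  have key : (U₁ * U₂.transpose).mulVec w = U₁.mulVec x := by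
    have h : U₂.transpose.mulVec w = x := by
      rw [hw, Matrix.mulVec_mulVec, ← hM, hMv]
    rw [← Matrix.mulVec_mulVec, h]
  have hwsq : w ⬝ᵥ w = x ⬝ᵥ M⁻¹.mulVec x := by
    rw [hw, Matrix.dotProduct_mulVec, ← Matrix.mulVec_transpose,
      Matrix.mulVec_mulVec, ← hM, hMv, hv]
  set z : EuclideanSpace ℝ (Fin n) := (WithLp.equiv 2 (Fin n → ℝ)).symm w with hz
  have hnz : ‖z‖ ≤ ε := by
    have h1 : ‖z‖ ^ 2 = w ⬝ᵥ w := by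
      rw [← real_inner_self_eq_norm_sq]
      simp [hz, PiLp.inner_apply, dotProduct, mul_comm]
      rw [EuclideanSpace.norm_eq, Real.sq_sqrt (by positivity)]; simp [sq]
    have h2 : ‖z‖ ^ 2 ≤ ε ^ 2 := by rw [h1, hwsq]; exact hx
    nlinarith [norm_nonneg z]
  have hfin : vnorm (U₁.mulVec x) =
      ‖(Matrix.toEuclideanLin (U₁ * U₂.transpose)).toContinuousLinearMap z‖ := by
    rw [← key, vnorm_eq']
    congr 1
  rw [hfin]
  calc ‖(Matrix.toEuclideanLin (U₁ * U₂.transpose)).toContinuousLinearMap z‖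
      ≤ spec (U₁ * U₂.transpose) * ‖z‖ :=
        (Matrix.toEuclideanLin (U₁ * U₂.transpose)).toContinuousLinearMap.le_opNorm z
    _ ≤ spec (U₁ * U₂.transpose) * ε :=
        mul_le_mul_of_nonneg_left hnz (norm_nonneg _)
    _ = ε * spec (U₁ * U₂.transpose) := mul_comm _ _
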